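/- Let G be a locally compact group and let μ, ν ∈ M(G) with Re μ = (μ + μ^⋆)/2 ∈ Z(M(G)) and μ − ν ∈ Z(M(G)). Define Δ : L¹(G) → M(G) by Δ(f) = f * μ − ν * f. Then for all f, g ∈ L¹(G) with f * g^⋆ = 0 one has f * Δ(g)^⋆ + Δ(f) * g^⋆ = 0. -/

import Mathlib

open Filter Topology

/-- An abstract interface for the measure convolution algebra `M(G)` of a locally compact
group `G`, together with the group algebra `L¹(G)` sitting inside it as a closed,
star-closed, two-sided ideal.  `wstar` is the weak* topology coming from
`M(G) = C₀(G)*`, and `delta` is the embedding of point masses (so `delta 1 = δ_e`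
is the identity of `M(G)`). -/
class MeasureAlgebraSetting (G : Type*) [Group G] [TopologicalSpace G] [IsTopologicalGroup G]
    [LocallyCompactSpace G] [T2Space G]
    (M : Type*) [NormedRing M] [StarRing M] [NormedAlgebra ℂ M] [CompleteSpace M]
    [StarModule ℂ M] where
  /-- the weak* topology on `M(G) = C₀(G)*` -/
  wstar : TopologicalSpace M
  /-- point masses `x ↦ δ_x` -/
  delta : G → M
  delta_one : delta 1 = 1
  delta_mul : ∀ x y : G, delta x * delta y = delta (x * y)
  delta_norm : ∀ x : G, ‖delta x‖ = 1
  /-- the group algebra `L¹(G)` inside `M(G)` -/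
  L1 : Submodule ℂ M
  L1_closed : IsClosed (L1 : Set M)
  L1_mul_left : ∀ (μ : M), ∀ f ∈ L1, μ * f ∈ L1
  L1_mul_right : ∀ (μ : M), ∀ f ∈ L1, f * μ ∈ L1
  L1_star : ∀ f ∈ L1, star f ∈ L1

variable {G : Type*} [Group G] [TopologicalSpace G] [IsTopologicalGroup G]
  [LocallyCompactSpace G] [T2Space G]
  {M : Type*} [NormedRing M] [StarRing M] [NormedAlgebra ℂ M] [CompleteSpace M]
  [StarModule ℂ M]

/-- convolution of elements of `L¹(G)` -/
instance instMulL1 {S : MeasureAlgebraSetting G M} : Mul S.L1 :=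
  ⟨fun f g => ⟨(f : M) * (g : M), S.L1_mul_left (f : M) (g : M) g.2⟩⟩

/-- involution on `L¹(G)` -/
instance instStarL1 {S : MeasureAlgebraSetting G M} : Star S.L1 :=
  ⟨fun f => ⟨star (f : M), S.L1_star (f : M) f.2⟩⟩

/-- Converse: for `μ, ν ∈ M(G)` with `Re μ` and `μ - ν` central, the map
`Δ(f) = f*μ - ν*f` is a derivation at pairs with `f * g⋆ = 0`. -/
theorem inner_like_is_derivation_at_star_orthogonality (S : MeasureAlgebraSetting G M)
    (mu nu : M) (hre : (2⁻¹ : ℂ) • (mu + star mu) ∈ Set.center M)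
    (hc : mu - nu ∈ Set.center M) :
    ∀ f ∈ S.L1, ∀ g ∈ S.L1, f * star g = 0 →
      f * star (g * mu - nu * g) + (f * mu - nu * f) * star g = 0 := by
  intro f hf g hg h0
  have hcomm : f * (mu + star mu) = (mu + star mu) * f := by
    have h := (hre.comm f).eq
    have h2 : (2⁻¹ : ℂ) ≠ 0 := by norm_num
    have h' : (2⁻¹ : ℂ) • ((mu + star mu) * f) = (2⁻¹ : ℂ) • (f * (mu + star mu)) := by
      simpa [smul_add, smul_mul_assoc, mul_smul_comm, mul_add, add_mul] using h
    exact (smul_right_injective M h2 h').symm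
  have key : f * (mu + star mu) * star g = 0 := by
    rw [hcomm, mul_assoc, h0, mul_zero]
  have h1 : f * (star g * star nu) = 0 := by rw [← mul_assoc, h0, zero_mul]
  have h2 : nu * f * star g = 0 := by rw [mul_assoc, h0, mul_zero]
  have h3 : f * (star mu * star g) + f * mu * star g = f * (mu + star mu) * star g := by
    noncomm_ring
  rw [star_sub, star_mul, star_mul, mul_sub, sub_mul, h1, h2, sub_zero, sub_zero]
  exact h3.trans key
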